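/- Let g : [p̲, p̄] → ℝ be differentiable with derivative g'(p) ∈ [S̲, S̄] for all p ∈ [p̲, p̄], where p̲ ≤ p̄, and suppose the interval center (S̲ + S̄)/2 ≥ 0. Set d = min(0, S̲). Then for all p ∈ [p̲, p̄], g(p) ∈ [g(p̲) - d(p̲ - p̄), g(p̄) + d(p̲ - p̄)]. -/
import Mathlib


theorem stmt_6 (plo phi Slo Shi : ℝ) (hp : plo ≤ phi)
    (g g' : ℝ → ℝ)
    (hderiv : ∀ p ∈ Set.Icc plo phi, HasDerivAt g (g' p) p)
    (hbound : ∀ p ∈ Set.Icc plo phi, g' p ∈ Set.Icc Slo Shi)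
    (hcenter : 0 ≤ (Slo + Shi) / 2) :
    ∀ p ∈ Set.Icc plo phi,
      g p ∈ Set.Icc (g plo - min 0 Slo * (plo - phi)) (g phi + min 0 Slo * (plo - phi)) := by
  intro p hpmem
  obtain ⟨hp1, hp2⟩ := hpmem
  set d := min 0 Slo with hd
  have hd0 : d ≤ 0 := min_le_left _ _
  have hcont : ContinuousOn g (Set.Icc plo phi) := fun x hx =>
    (hderiv x hx).continuousAt.continuousWithinAt
  have hdiff : DifferentiableOn ℝ g (interior (Set.Icc plo phi)) := by
    intro x hx
    rw [interior_Icc] at hx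
    exact (hderiv x (Set.Ioo_subset_Icc_self hx)).differentiableAt.differentiableWithinAt
  have hge : ∀ x ∈ interior (Set.Icc plo phi), d ≤ deriv g x := by
    intro x hx
    rw [interior_Icc] at hx
    have hx' := Set.Ioo_subset_Icc_self hx
    rw [(hderiv x hx').deriv]
    exact le_trans (min_le_right _ _) (hbound x hx').1
  have key := (convex_Icc plo phi).mul_sub_le_image_sub_of_le_deriv hcont hdiff hge
  have h1 := key plo (Set.left_mem_Icc.mpr hp) p ⟨hp1, hp2⟩ hp1
  have h2 := key p ⟨hp1, hp2⟩ phi (Set.right_mem_Icc.mpr hp) hp2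
  constructor <;> nlinarith
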